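/- Let Φ be a root system for a finite real reflection group W, and let (C⃗, c⃗) be a nontrivial m-dependence in Φ with m ≥ 3, whose entries α_1,…,α_m are pairwise distinct and whose underlying set C = {α_1,…,α_m} is a full circuit in Φ. Then there exists an m-dependence (C⃗′, c⃗′) in the Hurwitz orbit of (C⃗, c⃗) under the lifted Hurwitz moves with wt(c⃗′) < wt(c⃗). -/

import Mathlib

open scoped RealInnerProductSpace

variable {V : Type*} [NormedAddCommGroup V] [InnerProductSpace ℝ V] [FiniteDimensional ℝ V]

/-- The orthogonal reflection in the hyperplane `α^⊥`. -/
noncomputable def reflAlong (α : V) : V ≃ₗᵢ[ℝ] V :=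
  Submodule.reflection ((Submodule.span ℝ {α})ᗮ)

/-- An orthogonal reflection: the reflection through the hyperplane orthogonal to some
nonzero vector. -/
def IsReflection (g : V ≃ₗᵢ[ℝ] V) : Prop :=
  ∃ α : V, α ≠ 0 ∧ g = reflAlong α

/-- A finite real reflection group: a finite subgroup of the orthogonal group generated by its
reflections and fixing no nonzero vector. -/
def IsReflectionGroup (W : Subgroup (V ≃ₗᵢ[ℝ] V)) : Prop :=
  (W : Set (V ≃ₗᵢ[ℝ] V)).Finite ∧
    Subgroup.closure {g | g ∈ W ∧ IsReflection g} = W ∧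
    ∀ v : V, (∀ g ∈ W, g v = v) → v = 0
/-- A root system for `W`: a finite `W`-stable set of nonzero vectors, containing exactly two
opposite normal vectors for each reflecting hyperplane of a reflection of `W`. -/
def IsRootSystem (W : Subgroup (V ≃ₗᵢ[ℝ] V)) (Φ : Set V) : Prop :=
  Φ.Finite ∧
    (∀ g ∈ W, ∀ α ∈ Φ, g α ∈ Φ) ∧
    (∀ α ∈ Φ, α ≠ 0 ∧ reflAlong α ∈ W) ∧
    (∀ α ∈ Φ, {x | x ∈ Φ ∧ ∃ r : ℝ, x = r • α} = {α, -α}) ∧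
    (∀ g ∈ W, IsReflection g → ∃ α ∈ Φ, g = reflAlong α)
/-- A circuit: a finite linearly dependent set of vectors, every proper subset of which is
linearly independent. -/
def IsCircuit {V' : Type*} [AddCommGroup V'] [Module ℝ V'] (C : Set V') : Prop :=
  C.Finite ∧ ¬ LinearIndependent ℝ (fun x : C => (x : V')) ∧
    ∀ D : Set V', D ⊂ C → LinearIndependent ℝ (fun x : D => (x : V'))

/-- The weight of a coefficient vector: the sum of absolute values of its entries. -/
noncomputable def wtFn {m : ℕ} (c : Fin m → ℝ) : ℝ := ∑ i, |c i|

/-- The lifted Hurwitz move on `m`-dependences: `σ_i` replaces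
`(α_i, α_{i+1})` by `(α_{i+1}, s_{α_{i+1}}(α_i))` and `(c_i, c_{i+1})` by
`(c_{i+1} + (2⟪α_i, α_{i+1}⟫/⟪α_{i+1}, α_{i+1}⟫)·c_i, c_i)`. -/
noncomputable def DepMove {m : ℕ} (p q : (Fin m → V) × (Fin m → ℝ)) : Prop :=
  ∃ (i : Fin m) (h : (i : ℕ) + 1 < m),
    q.1 i = p.1 ⟨(i : ℕ) + 1, h⟩ ∧
    q.1 ⟨(i : ℕ) + 1, h⟩ = reflAlong (p.1 ⟨(i : ℕ) + 1, h⟩) (p.1 i) ∧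
    q.2 i = p.2 ⟨(i : ℕ) + 1, h⟩ +
      2 * ⟪p.1 i, p.1 ⟨(i : ℕ) + 1, h⟩⟫ / ⟪p.1 ⟨(i : ℕ) + 1, h⟩, p.1 ⟨(i : ℕ) + 1, h⟩⟫ * p.2 i ∧
    q.2 ⟨(i : ℕ) + 1, h⟩ = p.2 i ∧
    ∀ j : Fin m, j ≠ i → j ≠ ⟨(i : ℕ) + 1, h⟩ → q.1 j = p.1 j ∧ q.2 j = p.2 j

/-- Two `m`-dependences lie in the same Hurwitz orbit when they are related by a finite
sequence of lifted Hurwitz moves and their inverses. -/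
noncomputable def SameDepOrbit {m : ℕ} (p q : (Fin m → V) × (Fin m → ℝ)) : Prop :=
  Relation.EqvGen DepMove p q

set_option linter.unusedSectionVars false
set_option linter.unusedVariables false
set_option maxHeartbeats 1000000

lemma reflAlong_reflAlong (x y : V) : reflAlong x (reflAlong x y) = y :=
  Submodule.reflection_reflection _ y

lemma reflAlong_self (x : V) : reflAlong x x = -x := by
  have hx : x ∈ ((Submodule.span ℝ {x})ᗮ)ᗮ := by
    rw [Submodule.orthogonal_orthogonal]
    exact Submodule.mem_span_singleton_self x
  exact Submodule.reflection_mem_subspace_orthogonalComplement_eq_neg hx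

lemma inner_reflAlong (x y : V) : ⟪reflAlong x y, x⟫ = -⟪y, x⟫ := by
  have h1 : ⟪reflAlong x y, reflAlong x x⟫ = ⟪y, x⟫ := (reflAlong x).inner_map_map y x
  rw [reflAlong_self, inner_neg_right] at h1
  linarith

lemma wtFn_two_slots {m : ℕ} (c d : Fin m → ℝ) (i j : Fin m) (hij : i ≠ j)
    (h : ∀ q, q ≠ i → q ≠ j → d q = c q) :
    wtFn d = wtFn c - |c i| - |c j| + |d i| + |d j| := by
  classical
  unfold wtFn
  rw [← Finset.sum_compl_add_sum ({i, j} : Finset (Fin m)) (fun q => |d q|),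
    ← Finset.sum_compl_add_sum ({i, j} : Finset (Fin m)) (fun q => |c q|)]
  have h1 : ∑ q ∈ ({i, j} : Finset (Fin m))ᶜ, |d q| = ∑ q ∈ ({i, j} : Finset (Fin m))ᶜ, |c q| := by
    refine Finset.sum_congr rfl fun q hq => ?_
    simp only [Finset.mem_compl, Finset.mem_insert, Finset.mem_singleton, not_or] at hq
    rw [h q hq.1 hq.2]
  rw [h1, Finset.sum_pair hij, Finset.sum_pair hij]
  ring

/-- Sliding the root at slot `p` rightwards past slots `p+1, …, p+r`. -/
lemma slide_right {m : ℕ} (α : Fin m → V) (c : Fin m → ℝ) (p : ℕ) (hp : p < m) :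
    ∀ r, ∀ hr : p + r < m, ∀ J : Fin m, (J : ℕ) = p + r →
    ∃ (a : Fin m → V) (d : Fin m → ℝ),
      SameDepOrbit (α, c) (a, d) ∧
      a J = α ⟨p, hp⟩ ∧
      (∀ q : Fin m, (J : ℕ) < (q : ℕ) → a q = α q ∧ d q = c q) ∧
      d J = c ⟨p, hp⟩ +
        ∑ k ∈ Finset.univ.filter (fun k : Fin m => p < (k : ℕ) ∧ (k : ℕ) ≤ (J : ℕ)),
          2 * ⟪α ⟨p, hp⟩, α k⟫ / ⟪α ⟨p, hp⟩, α ⟨p, hp⟩⟫ * c k ∧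
      wtFn d = wtFn c - |c ⟨p, hp⟩| + |d J| := by
  classical
  intro r
  induction r with
  | zero =>
    intro hr J hJ
    have hJp : J = ⟨p, hp⟩ := Fin.ext (by show (J : ℕ) = p; omega)
    refine ⟨α, c, Relation.EqvGen.refl _, by rw [hJp], fun q _ => ⟨rfl, rfl⟩, ?_, by rw [hJp]; ring⟩
    have hfe : Finset.univ.filter (fun k : Fin m => p < (k : ℕ) ∧ (k : ℕ) ≤ (J : ℕ)) = ∅ := by
      ext k
      simp only [Finset.mem_filter, Finset.mem_univ, true_and, Finset.notMem_empty, iff_false]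
      omega
    rw [hfe, Finset.sum_empty, hJp]
    ring
  | succ r ih =>
    intro hr1 J hJ
    obtain ⟨a, d, horb, hcar, hright, hsum, hwt⟩ :=
      ih (by omega) ⟨p + r, by omega⟩ rfl
    set x : V := α ⟨p, hp⟩ with hx
    set i : Fin m := ⟨p + r, by omega⟩ with hi
    have hival : (i : ℕ) = p + r := rfl
    have hJi : (J : ℕ) = (i : ℕ) + 1 := by omega
    have hiJ : i ≠ J := by rw [Ne, Fin.ext_iff]; omega
    obtain ⟨haJ, hdJ⟩ := hright J (by omega)
    set u : ℝ := 2 * ⟪x, α J⟫ / ⟪x, x⟫ with hu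
    set N1 : Fin m → V := fun q => if q = i then reflAlong x (α J) else if q = J then x else a q
      with hN1
    set N2 : Fin m → ℝ := fun q => if q = i then c J else if q = J then d i + u * c J else d q
      with hN2
    have hN1i : N1 i = reflAlong x (α J) := by simp [hN1]
    have hN1J : N1 J = x := by simp [hN1, if_neg (Ne.symm hiJ)]
    have hN2i : N2 i = c J := by simp [hN2]
    have hN2J : N2 J = d i + u * c J := by simp [hN2, if_neg (Ne.symm hiJ)]
    have hbound : (i : ℕ) + 1 < m := by omega
    have hJ' : (⟨(i : ℕ) + 1, hbound⟩ : Fin m) = J := Fin.ext (by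
      show (i : ℕ) + 1 = (J : ℕ); omega)
    have hmove : DepMove (N1, N2) (a, d) := by
      refine ⟨i, hbound, ?_, ?_, ?_, ?_, ?_⟩
      · rw [hJ']; show a i = N1 J; rw [hN1J]; exact hcar
      · rw [hJ']; show a J = reflAlong (N1 J) (N1 i)
        rw [hN1J, hN1i, reflAlong_reflAlong, haJ]
      · rw [hJ']
        show d i = N2 J + 2 * ⟪N1 i, N1 J⟫ / ⟪N1 J, N1 J⟫ * N2 i
        rw [hN2J, hN2i, hN1i, hN1J, inner_reflAlong]
        rw [real_inner_comm x (α J), hu]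
        ring
      · rw [hJ']; show d J = N2 i; rw [hN2i, hdJ]
      · intro q hqi hqJ
        rw [hJ'] at hqJ
        exact ⟨by show a q = N1 q; simp [hN1, if_neg hqi, if_neg hqJ],
          by show d q = N2 q; simp [hN2, if_neg hqi, if_neg hqJ]⟩
    have horb' : SameDepOrbit (α, c) (N1, N2) :=
      Relation.EqvGen.trans _ _ _ horb
        (Relation.EqvGen.symm _ _ (Relation.EqvGen.rel _ _ hmove))
    have hfilt : Finset.univ.filter (fun k : Fin m => p < (k : ℕ) ∧ (k : ℕ) ≤ (J : ℕ)) =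
        insert J (Finset.univ.filter (fun k : Fin m => p < (k : ℕ) ∧ (k : ℕ) ≤ (i : ℕ))) := by
      ext k
      simp only [Finset.mem_filter, Finset.mem_univ, true_and, Finset.mem_insert, Fin.ext_iff]
      omega
    have hJnot : J ∉ Finset.univ.filter (fun k : Fin m => p < (k : ℕ) ∧ (k : ℕ) ≤ (i : ℕ)) := by
      simp only [Finset.mem_filter, Finset.mem_univ, true_and]
      omega
    refine ⟨N1, N2, horb', hN1J, ?_, ?_, ?_⟩
    · intro q hq
      have hqi : q ≠ i := by rw [Ne, Fin.ext_iff]; omega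
      have hqJ : q ≠ J := by rw [Ne, Fin.ext_iff]; omega
      have hh := hright q (by omega)
      exact ⟨by show N1 q = α q; simp [hN1, if_neg hqi, if_neg hqJ, hh.1],
        by show N2 q = c q; simp [hN2, if_neg hqi, if_neg hqJ, hh.2]⟩
    · rw [hN2J, hfilt, Finset.sum_insert hJnot, hsum, hu]
      ring
    · have h2 := wtFn_two_slots d N2 i J hiJ (fun q hqi hqJ => by
        show N2 q = d q; simp [hN2, if_neg hqi, if_neg hqJ])
      rw [h2, hN2i, hN2J, hwt, hdJ]
      ring

/-- Sliding the root at slot `p` leftwards past slots `p-1, …, p-r`. -/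
lemma slide_left {m : ℕ} (α : Fin m → V) (c : Fin m → ℝ) (p : ℕ) (hp : p < m) :
    ∀ r, r ≤ p → ∀ J : Fin m, (J : ℕ) = p - r →
    ∃ (a : Fin m → V) (d : Fin m → ℝ),
      SameDepOrbit (α, c) (a, d) ∧
      a J = α ⟨p, hp⟩ ∧
      (∀ q : Fin m, (q : ℕ) < (J : ℕ) → a q = α q ∧ d q = c q) ∧
      d J = c ⟨p, hp⟩ +
        ∑ k ∈ Finset.univ.filter (fun k : Fin m => (J : ℕ) ≤ (k : ℕ) ∧ (k : ℕ) < p),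
          2 * ⟪α ⟨p, hp⟩, α k⟫ / ⟪α ⟨p, hp⟩, α ⟨p, hp⟩⟫ * c k ∧
      wtFn d = wtFn c - |c ⟨p, hp⟩| + |d J| := by
  classical
  intro r
  induction r with
  | zero =>
    intro hr J hJ
    have hJp : J = ⟨p, hp⟩ := Fin.ext (by show (J : ℕ) = p; omega)
    refine ⟨α, c, Relation.EqvGen.refl _, by rw [hJp], fun q _ => ⟨rfl, rfl⟩, ?_, by rw [hJp]; ring⟩
    have hfe : Finset.univ.filter (fun k : Fin m => (J : ℕ) ≤ (k : ℕ) ∧ (k : ℕ) < p) = ∅ := by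
      ext k
      simp only [Finset.mem_filter, Finset.mem_univ, true_and, Finset.notMem_empty, iff_false]
      omega
    rw [hfe, Finset.sum_empty, hJp]
    ring
  | succ r ih =>
    intro hr1 J hJ
    obtain ⟨a, d, horb, hcar, hleft, hsum, hwt⟩ :=
      ih (by omega) ⟨p - r, by omega⟩ rfl
    set x : V := α ⟨p, hp⟩ with hx
    set i1 : Fin m := ⟨p - r, by omega⟩ with hi1
    have hi1val : (i1 : ℕ) = p - r := rfl
    have hJi : (J : ℕ) + 1 = (i1 : ℕ) := by omega
    have hiJ : J ≠ i1 := by rw [Ne, Fin.ext_iff]; omega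
    obtain ⟨haJ, hdJ⟩ := hleft J (by omega)
    set t : ℝ := 2 * ⟪α J, x⟫ / ⟪x, x⟫ with ht
    set N1 : Fin m → V := fun q => if q = J then x else if q = i1 then reflAlong x (α J) else a q
      with hN1
    set N2 : Fin m → ℝ := fun q => if q = J then d i1 + t * c J else if q = i1 then c J else d q
      with hN2
    have hN1J : N1 J = x := by simp [hN1]
    have hN1i : N1 i1 = reflAlong x (α J) := by simp [hN1, if_neg (Ne.symm hiJ)]
    have hN2J : N2 J = d i1 + t * c J := by simp [hN2]
    have hN2i : N2 i1 = c J := by simp [hN2, if_neg (Ne.symm hiJ)]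
    have hbound : (J : ℕ) + 1 < m := by omega
    have hJ' : (⟨(J : ℕ) + 1, hbound⟩ : Fin m) = i1 := Fin.ext (by
      show (J : ℕ) + 1 = (i1 : ℕ); omega)
    have hmove : DepMove (a, d) (N1, N2) := by
      refine ⟨J, hbound, ?_, ?_, ?_, ?_, ?_⟩
      · rw [hJ']; show N1 J = a i1; rw [hN1J, hcar]
      · rw [hJ']; show N1 i1 = reflAlong (a i1) (a J)
        rw [hN1i, hcar, haJ]
      · rw [hJ']
        show N2 J = d i1 + 2 * ⟪a J, a i1⟫ / ⟪a i1, a i1⟫ * d J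
        rw [hN2J, hcar, haJ, hdJ, ht]
      · rw [hJ']; show N2 i1 = d J; rw [hN2i, hdJ]
      · intro q hqJ hqi
        rw [hJ'] at hqi
        exact ⟨by show N1 q = a q; simp [hN1, if_neg hqJ, if_neg hqi],
          by show N2 q = d q; simp [hN2, if_neg hqJ, if_neg hqi]⟩
    have horb' : SameDepOrbit (α, c) (N1, N2) :=
      Relation.EqvGen.trans _ _ _ horb (Relation.EqvGen.rel _ _ hmove)
    have hfilt : Finset.univ.filter (fun k : Fin m => (J : ℕ) ≤ (k : ℕ) ∧ (k : ℕ) < p) =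
        insert J (Finset.univ.filter (fun k : Fin m => (i1 : ℕ) ≤ (k : ℕ) ∧ (k : ℕ) < p)) := by
      ext k
      simp only [Finset.mem_filter, Finset.mem_univ, true_and, Finset.mem_insert, Fin.ext_iff]
      omega
    have hJnot : J ∉ Finset.univ.filter (fun k : Fin m => (i1 : ℕ) ≤ (k : ℕ) ∧ (k : ℕ) < p) := by
      simp only [Finset.mem_filter, Finset.mem_univ, true_and]
      omega
    refine ⟨N1, N2, horb', hN1J, ?_, ?_, ?_⟩
    · intro q hq
      have hqJ : q ≠ J := by rw [Ne, Fin.ext_iff]; omega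
      have hqi : q ≠ i1 := by rw [Ne, Fin.ext_iff]; omega
      have hh := hleft q (by omega)
      exact ⟨by show N1 q = α q; simp [hN1, if_neg hqJ, if_neg hqi, hh.1],
        by show N2 q = c q; simp [hN2, if_neg hqJ, if_neg hqi, hh.2]⟩
    · rw [hN2J, hfilt, Finset.sum_insert hJnot, hsum, ht, real_inner_comm x (α J)]
      ring
    · have h2 := wtFn_two_slots d N2 J i1 hiJ (fun q hqJ hqi => by
        show N2 q = d q; simp [hN2, if_neg hqJ, if_neg hqi])
      rw [h2, hN2i, hN2J, hwt, hdJ]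
      ring

/-- A nontrivial `m`-dependence (`m ≥ 3`) supported on a full circuit admits an `m`-dependence
of strictly smaller weight in its Hurwitz orbit. -/
theorem stmt11 (W : Subgroup (V ≃ₗᵢ[ℝ] V)) (hW : IsReflectionGroup W)
    (Φ : Set V) (hΦ : IsRootSystem W Φ)
    (m : ℕ) (hm : 3 ≤ m) (α : Fin m → V) (c : Fin m → ℝ)
    (hαΦ : ∀ j, α j ∈ Φ) (hinj : Function.Injective α)
    (hcirc : IsCircuit (Set.range α))
    (hfull : Subgroup.closure (reflAlong '' Set.range α) = W)
    (hne : c ≠ 0) (hdep : ∑ j, c j • α j = 0) :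
    ∃ (α' : Fin m → V) (c' : Fin m → ℝ),
      SameDepOrbit (α, c) (α', c') ∧ wtFn c' < wtFn c := by
  classical
  by_contra hcon
  push_neg at hcon
  -- basic facts
  have hα0 : ∀ k, α k ≠ 0 := fun k => (hΦ.2.2.1 _ (hαΦ k)).1
  have hA : ∀ k, (0:ℝ) < ⟪α k, α k⟫ := fun k => by
    rw [real_inner_self_eq_norm_mul_norm]
    exact mul_pos (norm_pos_iff.mpr (hα0 k)) (norm_pos_iff.mpr (hα0 k))
  -- all coefficients are nonzero
  have hc0 : ∀ k, c k ≠ 0 := by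
    intro k0 hk0
    apply hne
    have hDsub : (Set.range α \ {α k0} : Set V) ⊂ Set.range α := by
      refine HasSubset.Subset.ssubset_of_ne Set.diff_subset ?_
      intro h
      have h2 : α k0 ∈ Set.range α \ {α k0} := by rw [h]; exact Set.mem_range_self k0
      exact h2.2 rfl
    have hli := hcirc.2.2 _ hDsub
    set e : {j : Fin m // j ≠ k0} → (Set.range α \ {α k0} : Set V) := fun j =>
      ⟨α j.1, Set.mem_range_self _, fun hmem => j.2 (hinj (Set.mem_singleton_iff.mp hmem))⟩
      with he_def
    have he : Function.Injective e := by
      intro j j' h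
      exact Subtype.ext (hinj (congrArg Subtype.val h))
    have hli2 : LinearIndependent ℝ (fun j : {j : Fin m // j ≠ k0} => α j.1) := hli.comp e he
    have hsum0 : ∑ j : {j : Fin m // j ≠ k0}, c j.1 • α j.1 = 0 := by
      rw [← Finset.sum_subtype (Finset.univ.erase k0)
        (fun j => by simp [Finset.mem_erase]) (fun j => c j • α j)]
      have h := Finset.add_sum_erase Finset.univ (fun j => c j • α j) (Finset.mem_univ k0)
      simp only [hdep, hk0, zero_smul, zero_add] at h
      exact h
    have hall := Fintype.linearIndependent_iff.mp hli2 (fun j => c j.1) hsum0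
    funext j
    by_cases hj : j = k0
    · rw [hj]; exact hk0
    · exact hall ⟨j, hj⟩
  -- pairwise non-parallelism
  have hpairind : ∀ k l : Fin m, k ≠ l → (α l) ∉ Submodule.span ℝ {α k} := by
    intro k l hkl
    obtain ⟨j, hj⟩ : ∃ j : Fin m, j ∉ ({k, l} : Finset (Fin m)) := by
      by_contra h
      push_neg at h
      have hsub : (Finset.univ : Finset (Fin m)) ⊆ {k, l} := fun x _ => h x
      have h1 := Finset.card_le_card hsub
      have h2 : ({k, l} : Finset (Fin m)).card ≤ 2 :=
        (Finset.card_insert_le _ _).trans (by simp)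
      rw [Finset.card_univ, Fintype.card_fin] at h1
      omega
    simp only [Finset.mem_insert, Finset.mem_singleton, not_or] at hj
    have hDsub : (Set.range α \ {α j} : Set V) ⊂ Set.range α := by
      refine HasSubset.Subset.ssubset_of_ne Set.diff_subset ?_
      intro h
      have h2 : α j ∈ Set.range α \ {α j} := by rw [h]; exact Set.mem_range_self j
      exact h2.2 rfl
    have hli := hcirc.2.2 _ hDsub
    have hmemD : ∀ i : Fin m, i ≠ j → α i ∈ Set.range α \ {α j} := fun i hij =>
      ⟨Set.mem_range_self i, fun hmem => hij (hinj (Set.mem_singleton_iff.mp hmem))⟩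
    have hpair : ({α l, α k} : Set V) ⊆ Set.range α \ {α j} := by
      intro z hz
      rcases hz with rfl | hz
      · exact hmemD l (fun h => hj.2 h.symm)
      · rw [Set.mem_singleton_iff.mp hz]
        exact hmemD k (fun h => hj.1 h.symm)
    have hli3 := LinearIndepOn.mono (R := ℝ) (v := id) hli hpair
    have hnotmem : (α l) ∉ ({α k} : Set V) := fun h =>
      hkl (hinj (Set.mem_singleton_iff.mp h)).symm
    exact ((linearIndepOn_id_insert hnotmem).mp hli3).2
  have hcs : ∀ k l : Fin m, k ≠ l →
      |⟪c k • α k, c l • α l⟫| < ‖c k • α k‖ * ‖c l • α l‖ := by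
    intro k l hkl
    have h1 : |⟪α k, α l⟫| < ‖α k‖ * ‖α l‖ := by
      have hne1 : ‖α l‖ • α k ≠ ‖α k‖ • α l := by
        intro h
        apply hpairind k l hkl
        rw [Submodule.mem_span_singleton]
        have hk0 : ‖α k‖ ≠ 0 := norm_ne_zero_iff.mpr (hα0 k)
        have h' := congrArg (fun z : V => ‖α k‖⁻¹ • z) h
        simp only [smul_smul] at h'
        rw [inv_mul_cancel₀ hk0, one_smul] at h'
        exact ⟨_, h'⟩
      have hne2 : ‖-α l‖ • α k ≠ ‖α k‖ • (-α l) := by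
        intro h
        apply hpairind k l hkl
        rw [Submodule.mem_span_singleton]
        have hk0 : ‖α k‖ ≠ 0 := norm_ne_zero_iff.mpr (hα0 k)
        rw [norm_neg] at h
        have h' := congrArg (fun z : V => ‖α k‖⁻¹ • z) h
        simp only [smul_smul] at h'
        rw [inv_mul_cancel₀ hk0, one_smul] at h'
        refine ⟨-(‖α k‖⁻¹ * ‖α l‖), ?_⟩
        rw [neg_smul, h', neg_neg]
      have hlt1 : ⟪α k, α l⟫ < ‖α k‖ * ‖α l‖ := inner_lt_norm_mul_iff_real.mpr hne1
      have hlt2 : ⟪α k, -α l⟫ < ‖α k‖ * ‖-α l‖ := inner_lt_norm_mul_iff_real.mpr hne2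
      rw [inner_neg_right, norm_neg] at hlt2
      rw [abs_lt]
      constructor <;> linarith
    have hck : 0 < |c k| := abs_pos.mpr (hc0 k)
    have hcl : 0 < |c l| := abs_pos.mpr (hc0 l)
    calc |⟪c k • α k, c l • α l⟫| = |c k| * |c l| * |⟪α k, α l⟫| := by
          rw [real_inner_smul_left, real_inner_smul_right, abs_mul, abs_mul]; ring
      _ < |c k| * |c l| * (‖α k‖ * ‖α l‖) := by
          exact mul_lt_mul_of_pos_left h1 (mul_pos hck hcl)
      _ = ‖c k • α k‖ * ‖c l • α l‖ := by
          rw [norm_smul, norm_smul, Real.norm_eq_abs, Real.norm_eq_abs]; ring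
  -- Gram matrix abbreviation
  set g : Fin m → Fin m → ℝ := fun k l => ⟪c k • α k, c l • α l⟫ with hgdef
  have hgsmul : ∀ k l, g k l = c k * c l * ⟪α k, α l⟫ := by
    intro k l
    simp only [hgdef]
    rw [real_inner_smul_left, real_inner_smul_right]
    ring
  have hnormb : ∀ k, (0:ℝ) < ‖c k • α k‖ := fun k =>
    norm_pos_iff.mpr (smul_ne_zero (hc0 k) (hα0 k))
  have hgpp : ∀ k, g k k = ‖c k • α k‖ * ‖c k • α k‖ := fun k =>
    real_inner_self_eq_norm_mul_norm _
  have hgpos : ∀ k, 0 < g k k := fun k => by rw [hgpp]; exact mul_pos (hnormb k) (hnormb k)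
  have hrow : ∀ k, ∑ l, g k l = 0 := by
    intro k
    simp only [hgdef]
    rw [← inner_sum, hdep, inner_zero_right]
  -- the key numeric inequality for a weight-reducing slide
  have habs : ∀ (q : Fin m) (S : ℝ), -(g q q) < S → S < 0 →
      |c q + 2 * S / (c q * ⟪α q, α q⟫)| < |c q| := by
    intro q S h1 h2
    have hAq := hA q
    have hcq := hc0 q
    have hgq : g q q = c q ^ 2 * ⟪α q, α q⟫ := by
      rw [hgsmul]
      ring
    have hAne : ⟪α q, α q⟫ ≠ 0 := hAq.ne'
    have hD2 : (c q + 2 * S / (c q * ⟪α q, α q⟫)) ^ 2 - (c q) ^ 2 =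
        4 * S * ((c q) ^ 2 * ⟪α q, α q⟫ + S) / ((c q) ^ 2 * ⟪α q, α q⟫ ^ 2) := by
      field_simp
      ring
    have hnum : 4 * S * ((c q) ^ 2 * ⟪α q, α q⟫ + S) < 0 := by
      apply mul_neg_of_neg_of_pos (by linarith)
      rw [hgq] at h1
      linarith
    have hden : 0 < (c q) ^ 2 * ⟪α q, α q⟫ ^ 2 := by positivity
    have h4 := div_neg_of_neg_of_pos hnum hden
    have hsq : (c q + 2 * S / (c q * ⟪α q, α q⟫)) ^ 2 < (c q) ^ 2 := by linarith
    have hD0 := abs_nonneg (c q + 2 * S / (c q * ⟪α q, α q⟫))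
    have hcabs := abs_nonneg (c q)
    nlinarith [sq_abs (c q + 2 * S / (c q * ⟪α q, α q⟫)), sq_abs (c q)]
  -- no right slide reduces
  have hnoright : ∀ (q : Fin m) (j : ℕ) (hj : j < m),
      -(g q q) < (∑ k ∈ Finset.univ.filter
          (fun k : Fin m => (q:ℕ) < (k:ℕ) ∧ (k:ℕ) ≤ j), g q k) →
      (∑ k ∈ Finset.univ.filter
          (fun k : Fin m => (q:ℕ) < (k:ℕ) ∧ (k:ℕ) ≤ j), g q k) < 0 → False := by
    intro q j hj h1 h2
    set S := ∑ k ∈ Finset.univ.filter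
      (fun k : Fin m => (q:ℕ) < (k:ℕ) ∧ (k:ℕ) ≤ j), g q k with hS
    have hqj : (q:ℕ) < j := by
      by_contra hle
      push_neg at hle
      have : Finset.univ.filter (fun k : Fin m => (q:ℕ) < (k:ℕ) ∧ (k:ℕ) ≤ j) = ∅ := by
        ext k
        simp only [Finset.mem_filter, Finset.mem_univ, true_and, Finset.notMem_empty, iff_false]
        omega
      rw [hS, this, Finset.sum_empty] at h2
      exact lt_irrefl 0 h2
    obtain ⟨a, d, horb, -, -, hdJ, hwt⟩ :=
      slide_right α c (q:ℕ) q.isLt (j - (q:ℕ)) (by omega) ⟨j, hj⟩ (by simp; omega)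
    simp only [Fin.eta] at hdJ hwt
    have hsumeq : d ⟨j, hj⟩ = c q + 2 * S / (c q * ⟪α q, α q⟫) := by
      rw [hdJ, hS]
      have hterm : ∀ k ∈ Finset.univ.filter
          (fun k : Fin m => (q:ℕ) < (k:ℕ) ∧ (k:ℕ) ≤ j),
          2 * ⟪α q, α k⟫ / ⟪α q, α q⟫ * c k
            = 2 / (c q * ⟪α q, α q⟫) * g q k := by
        intro k _
        rw [hgsmul]
        field_simp [hc0 q, (hA q).ne']
      rw [Finset.sum_congr rfl hterm, ← Finset.mul_sum]
      ring
    have hlt := habs q S h1 h2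
    rw [← hsumeq] at hlt
    have hle := hcon a d horb
    rw [hwt] at hle
    have hcq : 0 < |c q| := abs_pos.mpr (hc0 q)
    linarith
  -- no left slide reduces
  have hnoleft : ∀ (q : Fin m) (i : ℕ) (hi : i < m),
      -(g q q) < (∑ k ∈ Finset.univ.filter
          (fun k : Fin m => i ≤ (k:ℕ) ∧ (k:ℕ) < (q:ℕ)), g q k) →
      (∑ k ∈ Finset.univ.filter
          (fun k : Fin m => i ≤ (k:ℕ) ∧ (k:ℕ) < (q:ℕ)), g q k) < 0 → False := by
    intro q i hi h1 h2
    set S := ∑ k ∈ Finset.univ.filter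
      (fun k : Fin m => i ≤ (k:ℕ) ∧ (k:ℕ) < (q:ℕ)), g q k with hS
    have hqi : i < (q:ℕ) := by
      by_contra hle
      push_neg at hle
      have : Finset.univ.filter (fun k : Fin m => i ≤ (k:ℕ) ∧ (k:ℕ) < (q:ℕ)) = ∅ := by
        ext k
        simp only [Finset.mem_filter, Finset.mem_univ, true_and, Finset.notMem_empty, iff_false]
        omega
      rw [hS, this, Finset.sum_empty] at h2
      exact lt_irrefl 0 h2
    obtain ⟨a, d, horb, -, -, hdJ, hwt⟩ :=
      slide_left α c (q:ℕ) q.isLt ((q:ℕ) - i) (by omega) ⟨i, hi⟩ (by simp; omega)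
    simp only [Fin.eta] at hdJ hwt
    have hsumeq : d ⟨i, hi⟩ = c q + 2 * S / (c q * ⟪α q, α q⟫) := by
      rw [hdJ, hS]
      have hterm : ∀ k ∈ Finset.univ.filter
          (fun k : Fin m => i ≤ (k:ℕ) ∧ (k:ℕ) < (q:ℕ)),
          2 * ⟪α q, α k⟫ / ⟪α q, α q⟫ * c k
            = 2 / (c q * ⟪α q, α q⟫) * g q k := by
        intro k _
        rw [hgsmul]
        field_simp [hc0 q, (hA q).ne']
      rw [Finset.sum_congr rfl hterm, ← Finset.mul_sum]
      ring
    have hlt := habs q S h1 h2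
    rw [← hsumeq] at hlt
    have hle := hcon a d horb
    rw [hwt] at hle
    have hcq : 0 < |c q| := abs_pos.mpr (hc0 q)
    linarith
  -- maximal-norm index
  have hnon : (Finset.univ : Finset (Fin m)).Nonempty := ⟨⟨0, by omega⟩, Finset.mem_univ _⟩
  obtain ⟨p, -, hmax⟩ := Finset.exists_max_image Finset.univ (fun k => ‖c k • α k‖) hnon
  -- the partner with very negative inner product
  have hbad : ∃ q' : Fin m, q' ≠ p ∧ g p q' ≤ -(g p p) := by
    set SR : ℕ → ℝ := fun j => ∑ k ∈ Finset.univ.filter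
      (fun k : Fin m => (p:ℕ) < (k:ℕ) ∧ (k:ℕ) ≤ j), g p k with hSRdef
    set SL : ℕ → ℝ := fun i => ∑ k ∈ Finset.univ.filter
      (fun k : Fin m => i ≤ (k:ℕ) ∧ (k:ℕ) < (p:ℕ)), g p k with hSLdef
    have htot : SR (m-1) + SL 0 = -(g p p) := by
      have h0 := hrow p
      rw [← Finset.sum_filter_add_sum_filter_not Finset.univ
        (fun k : Fin m => (k:ℕ) < (p:ℕ)) (fun l => g p l)] at h0
      have hfR : Finset.univ.filter (fun k : Fin m => ¬(k:ℕ) < (p:ℕ)) =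
          insert p (Finset.univ.filter (fun k : Fin m => (p:ℕ) < (k:ℕ) ∧ (k:ℕ) ≤ m-1)) := by
        ext k
        have hk := k.isLt
        simp only [Finset.mem_filter, Finset.mem_univ, true_and, Finset.mem_insert, Fin.ext_iff]
        omega
      have hfL : Finset.univ.filter (fun k : Fin m => (k:ℕ) < (p:ℕ)) =
          Finset.univ.filter (fun k : Fin m => 0 ≤ (k:ℕ) ∧ (k:ℕ) < (p:ℕ)) := by
        ext k
        simp only [Finset.mem_filter, Finset.mem_univ, true_and]
        omega
      rw [hfR, Finset.sum_insert (by
        simp only [Finset.mem_filter, Finset.mem_univ, true_and]; omega), hfL] at h0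
      simp only [hSRdef, hSLdef]
      linarith
    by_cases hR : SR (m-1) < 0
    · have hex : ∃ j, j < m ∧ SR j < 0 := ⟨m-1, by omega, hR⟩
      obtain ⟨hj0m, hj0neg⟩ := Nat.find_spec hex
      set j0 := Nat.find hex with hj0def
      have hpj0 : (p:ℕ) < j0 := by
        by_contra hle
        push_neg at hle
        have hz : SR j0 = 0 := by
          simp only [hSRdef]
          rw [show Finset.univ.filter (fun k : Fin m => (p:ℕ) < (k:ℕ) ∧ (k:ℕ) ≤ j0) = ∅ by
            ext k
            simp only [Finset.mem_filter, Finset.mem_univ, true_and,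
              Finset.notMem_empty, iff_false]
            omega]
          exact Finset.sum_empty
        rw [hz] at hj0neg
        exact lt_irrefl 0 hj0neg
      have hprev : 0 ≤ SR (j0 - 1) := by
        have hm1 := Nat.find_min hex (show j0 - 1 < j0 by omega)
        push_neg at hm1
        exact hm1 (by omega)
      have hstep : SR j0 = SR (j0 - 1) + g p ⟨j0, hj0m⟩ := by
        simp only [hSRdef]
        rw [show Finset.univ.filter (fun k : Fin m => (p:ℕ) < (k:ℕ) ∧ (k:ℕ) ≤ j0) =
            insert (⟨j0, hj0m⟩ : Fin m)
              (Finset.univ.filter (fun k : Fin m => (p:ℕ) < (k:ℕ) ∧ (k:ℕ) ≤ j0 - 1)) by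
          ext k
          simp only [Finset.mem_filter, Finset.mem_univ, true_and, Finset.mem_insert,
            Fin.ext_iff]
          omega]
        rw [Finset.sum_insert (by
          simp only [Finset.mem_filter, Finset.mem_univ, true_and]; omega)]
        ring
      have hj0le : SR j0 ≤ -(g p p) :=
        le_of_not_gt fun hgt => hnoright p j0 hj0m hgt hj0neg
      refine ⟨⟨j0, hj0m⟩, ?_, ?_⟩
      · rw [Ne, Fin.ext_iff]; simp; omega
      · have : g p ⟨j0, hj0m⟩ = SR j0 - SR (j0 - 1) := by rw [hstep]; ring
        rw [this]
        linarith
    · push_neg at hR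
      have hL : SL 0 < 0 := by
        have := hgpos p
        linarith
      have hex : ∃ r, SL ((p:ℕ) - r) < 0 := ⟨(p:ℕ), by rw [Nat.sub_self]; exact hL⟩
      obtain hneg := Nat.find_spec hex
      set r0 := Nat.find hex with hr0def
      have hr0p : r0 ≤ (p:ℕ) := Nat.find_min' hex (by rw [Nat.sub_self]; exact hL)
      have hr0pos : 1 ≤ r0 := by
        rcases Nat.eq_zero_or_pos r0 with h | h
        · exfalso
          rw [h] at hneg
          have hz : SL ((p:ℕ) - 0) = 0 := by
            simp only [hSLdef]
            rw [show Finset.univ.filter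
                (fun k : Fin m => (p:ℕ) - 0 ≤ (k:ℕ) ∧ (k:ℕ) < (p:ℕ)) = ∅ by
              ext k
              simp only [Finset.mem_filter, Finset.mem_univ, true_and,
                Finset.notMem_empty, iff_false]
              omega]
            exact Finset.sum_empty
          rw [hz] at hneg
          exact lt_irrefl 0 hneg
        · exact h
      set i0 := (p:ℕ) - r0 with hi0def
      have hi0p : i0 < (p:ℕ) := by omega
      have hi0m : i0 < m := by have := p.isLt; omega
      have hprev : 0 ≤ SL (i0 + 1) := by
        have hm1 := Nat.find_min hex (show r0 - 1 < r0 by omega)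
        rw [show (p:ℕ) - (r0 - 1) = i0 + 1 by omega] at hm1
        exact le_of_not_gt hm1
      have hstep : SL i0 = SL (i0 + 1) + g p ⟨i0, hi0m⟩ := by
        simp only [hSLdef]
        rw [show Finset.univ.filter (fun k : Fin m => i0 ≤ (k:ℕ) ∧ (k:ℕ) < (p:ℕ)) =
            insert (⟨i0, hi0m⟩ : Fin m)
              (Finset.univ.filter (fun k : Fin m => i0 + 1 ≤ (k:ℕ) ∧ (k:ℕ) < (p:ℕ))) by
          ext k
          simp only [Finset.mem_filter, Finset.mem_univ, true_and, Finset.mem_insert,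
            Fin.ext_iff]
          omega]
        rw [Finset.sum_insert (by
          simp only [Finset.mem_filter, Finset.mem_univ, true_and]; omega)]
        ring
      have hi0le : SL i0 ≤ -(g p p) :=
        le_of_not_gt fun hgt => hnoleft p i0 hi0m hgt hneg
      refine ⟨⟨i0, hi0m⟩, ?_, ?_⟩
      · rw [Ne, Fin.ext_iff]; simp; omega
      · have : g p ⟨i0, hi0m⟩ = SL i0 - SL (i0 + 1) := by rw [hstep]; ring
        rw [this]
        linarith
  obtain ⟨q', hq'p, hq'⟩ := hbad
  have h1 : ‖c p • α p‖ * ‖c p • α p‖ ≤ |g p q'| := by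
    rw [← hgpp]
    have := neg_le_abs (g p q')
    linarith
  have h2 : |g p q'| < ‖c p • α p‖ * ‖c q' • α q'‖ := hcs p q' (Ne.symm hq'p)
  have h3 : ‖c p • α p‖ < ‖c q' • α q'‖ :=
    (mul_lt_mul_iff_right₀ (hnormb p)).mp (lt_of_le_of_lt h1 h2)
  exact absurd (hmax q' (Finset.mem_univ q')) (not_le.mpr h3)
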